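/- Let H be a normalized n×n Hadamard matrix, p_1,…,p_{n−1} distinct odd primes, λ_0 = 0 and λ_r (1 ≤ r ≤ n−1) integers satisfying λ_r ≡ (1 − H_{j,r})/2 (mod p_j) for each j = 1,…,n−1. Let L = (1/n) H diag(λ_0,…,λ_{n−1}) H^T and U(t) = e^{-itL}. Then for each k = 1,…,n−1, U(2π/p_k) e_0 = ½(1 + e^{-2πi/p_k}) e_0 + ½(1 − e^{-2πi/p_k}) e_k; in particular proper fractional revival occurs from vertex 0 to vertex k at time 2π/p_k, for every k, so fractional revival is not monogamous. -/

import Mathlib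

open Matrix

noncomputable def transU {n : ℕ} (A : Matrix (Fin n) (Fin n) ℝ) (t : ℝ) :
    Matrix (Fin n) (Fin n) ℂ :=
  NormedSpace.exp ((-Complex.I * (t : ℂ)) • A.map (Complex.ofReal))

/-- Polygamy of fractional revival: for the Laplacian `L = (1/n) H D H^T`
built from a normalized Hadamard matrix `H` and eigenvalues `λ_r` chosen by the
Chinese remainder theorem modulo distinct odd primes `p_1, …, p_{n-1}`, proper
fractional revival occurs from vertex `0` to vertex `k` at time `2π/p_k`, for
every `k = 1, …, n-1`; so fractional revival is not monogamous. -/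
theorem hadamard_polygamous_fractional_revival {n : ℕ} [NeZero n] (hn : 1 < n)
    (H : Matrix (Fin n) (Fin n) ℝ)
    (hent : ∀ i j, H i j = 1 ∨ H i j = -1)
    (hHad : H * Hᵀ = (n : ℝ) • (1 : Matrix (Fin n) (Fin n) ℝ))
    (hrow : ∀ j, H 0 j = 1) (hcol : ∀ i, H i 0 = 1)
    (p : Fin n → ℕ)
    (hp : ∀ j : Fin n, j ≠ 0 → Nat.Prime (p j) ∧ Odd (p j))
    (hpdist : ∀ j l : Fin n, j ≠ 0 → l ≠ 0 → p j = p l → j = l)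
    (lam : Fin n → ℤ) (hlam0 : lam 0 = 0)
    (hcong : ∀ j r : Fin n, j ≠ 0 →
      (H j r = 1 → (p j : ℤ) ∣ lam r) ∧ (H j r = -1 → (p j : ℤ) ∣ (lam r - 1))) :
    ∀ k : Fin n, k ≠ 0 →
      (transU ((n : ℝ)⁻¹ • (H * Matrix.diagonal (fun r => (lam r : ℝ)) * Hᵀ))
          (2 * Real.pi / p k)).mulVec (Pi.single (0 : Fin n) (1 : ℂ))
        = ((1 + Complex.exp (-(2 * Real.pi * Complex.I) / p k)) / 2) •
            (Pi.single (0 : Fin n) 1 : Fin n → ℂ) +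
          ((1 - Complex.exp (-(2 * Real.pi * Complex.I) / p k)) / 2) •
            (Pi.single k 1 : Fin n → ℂ) ∧
      ((1 + Complex.exp (-(2 * Real.pi * Complex.I) / p k)) / 2) ≠ 0 ∧
      ((1 - Complex.exp (-(2 * Real.pi * Complex.I) / p k)) / 2) ≠ 0 := by
  intro k hk
  obtain ⟨hpk, hodd⟩ := hp k hk
  have hnC : (n : ℂ) ≠ 0 := Nat.cast_ne_zero.mpr (NeZero.ne n)
  have hpC : (p k : ℂ) ≠ 0 := Nat.cast_ne_zero.mpr hpk.ne_zero
  have h2pi : (2 * (Real.pi : ℂ) * Complex.I) ≠ 0 := by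
    simp [Complex.ofReal_ne_zero, Real.pi_ne_zero, Complex.I_ne_zero]
  set ω : ℂ := Complex.exp (-(2 * Real.pi * Complex.I) / p k) with hω
  set c : ℂ := -Complex.I * ((2 * Real.pi / (p k : ℝ) : ℝ) : ℂ) with hc
  have hcω : Complex.exp c = ω := by
    rw [hω, hc]
    congr 1
    push_cast
    field_simp
  set K : Matrix (Fin n) (Fin n) ℂ := H.map Complex.ofReal with hKdef
  have hKapp : ∀ i j, K i j = (H i j : ℂ) := fun i j => rfl
  have horth : ∀ i j, (∑ r, K i r * K j r) = if i = j then (n : ℂ) else 0 := by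
    intro i j
    have h := congrFun (congrFun hHad i) j
    simp only [Matrix.mul_apply, Matrix.transpose_apply, Matrix.smul_apply,
      Matrix.one_apply, smul_eq_mul] at h
    calc (∑ r, K i r * K j r) = ((∑ r, H i r * H j r : ℝ) : ℂ) := by
          push_cast; rfl
      _ = _ := by rw [h]; split <;> simp
  have hKK : K * Kᵀ = (n : ℂ) • (1 : Matrix (Fin n) (Fin n) ℂ) := by
    ext i j
    simp only [Matrix.mul_apply, Matrix.transpose_apply, Matrix.smul_apply,
      Matrix.one_apply, smul_eq_mul]
    rw [horth i j]; split <;> simp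
  have hright : K * ((n : ℂ)⁻¹ • Kᵀ) = 1 := by
    rw [Matrix.mul_smul, hKK, smul_smul, inv_mul_cancel₀ hnC, one_smul]
  have hleft : ((n : ℂ)⁻¹ • Kᵀ) * K = 1 := mul_eq_one_comm.mp hright
  have hKunit : IsUnit K := ⟨⟨K, (n : ℂ)⁻¹ • Kᵀ, hright, hleft⟩, rfl⟩
  have hKinv : K⁻¹ = (n : ℂ)⁻¹ • Kᵀ := Matrix.inv_eq_right_inv hright
  have hmap : ((n : ℝ)⁻¹ • (H * Matrix.diagonal (fun r => (lam r : ℝ)) * Hᵀ)).map Complex.ofReal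
      = (n : ℂ)⁻¹ • (K * Matrix.diagonal (fun r => (lam r : ℂ)) * Kᵀ) := by
    ext i j
    simp only [Matrix.map_apply, Matrix.smul_apply, Matrix.mul_apply, Matrix.mul_diagonal,
      Matrix.transpose_apply, smul_eq_mul, hKapp]
    push_cast
    rw [Finset.mul_sum, Finset.mul_sum]
    congr 1
    funext r
    simp only [Matrix.diagonal_apply, apply_ite Complex.ofReal, Complex.ofReal_intCast,
      Complex.ofReal_zero]
  have hDsm : Matrix.diagonal (fun r => c * (lam r : ℂ))
      = c • Matrix.diagonal (fun r => (lam r : ℂ)) := by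
    rw [← Matrix.diagonal_smul]
    rfl
  have hA : (-Complex.I * ((2 * Real.pi / (p k : ℝ) : ℝ) : ℂ)) •
      ((n : ℝ)⁻¹ • (H * Matrix.diagonal (fun r => (lam r : ℝ)) * Hᵀ)).map Complex.ofReal
      = K * Matrix.diagonal (fun r => c * (lam r : ℂ)) * K⁻¹ := by
    rw [hmap, hKinv, hDsm, ← hc]
    simp only [Matrix.mul_smul, Matrix.smul_mul]
    rw [smul_comm]
  have hexpU : transU ((n : ℝ)⁻¹ • (H * Matrix.diagonal (fun r => (lam r : ℝ)) * Hᵀ))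
      (2 * Real.pi / p k)
      = K * Matrix.diagonal (fun r => Complex.exp (c * (lam r : ℂ))) * K⁻¹ := by
    rw [transU, hA, Matrix.exp_conj _ _ hKunit, Matrix.exp_diagonal]
    have hpi : (NormedSpace.exp fun r => c * (lam r : ℂ))
        = fun r => Complex.exp (c * (lam r : ℂ)) := by
      funext r
      rw [Pi.coe_exp, ← Complex.exp_eq_exp_ℂ]
    rw [hpi]
  have hdiag : ∀ r, Complex.exp (c * (lam r : ℂ))
      = (1 + ω) / 2 + (1 - ω) / 2 * K k r := by
    intro r
    rcases hent k r with h1 | h1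
    · obtain ⟨m, hm⟩ := (hcong k r hk).1 h1
      have he : c * (lam r : ℂ) = (-m : ℤ) * (2 * Real.pi * Complex.I) := by
        rw [hm, hc]; push_cast; field_simp
      rw [he, Complex.exp_int_mul_two_pi_mul_I, hKapp, h1]
      push_cast; ring
    · obtain ⟨m, hm⟩ := (hcong k r hk).2 h1
      have hlr : lam r = (p k : ℤ) * m + 1 := by linarith [hm]
      have he : c * (lam r : ℂ) = (-m : ℤ) * (2 * Real.pi * Complex.I) + c := by
        rw [hlr, hc]; push_cast; field_simp; ring
      rw [he, Complex.exp_add, Complex.exp_int_mul_two_pi_mul_I, one_mul, hcω, hKapp, h1]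
      push_cast; ring
  have hb : ((1 - ω) / 2) ≠ 0 := by
    intro h
    have hω1 : ω = 1 := by linear_combination -2 * h
    rw [hω, Complex.exp_eq_one_iff] at hω1
    obtain ⟨m, hm⟩ := hω1
    have key : (-1 : ℂ) = m * p k := by
      apply mul_right_cancel₀ h2pi
      field_simp at hm
      linear_combination (2 * (Real.pi : ℂ) * Complex.I) * hm
    have keyZ : ((m * p k : ℤ) : ℂ) = ((-1 : ℤ) : ℂ) := by push_cast; linear_combination -key
    have : (m * (p k : ℤ)) = -1 := by exact_mod_cast keyZ
    have hdvd : (p k : ℤ) ∣ 1 := ⟨-m, by linarith⟩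
    have : p k ∣ 1 := by exact_mod_cast hdvd
    exact absurd (Nat.dvd_one.mp this) hpk.one_lt.ne'
  have ha : ((1 + ω) / 2) ≠ 0 := by
    intro h
    have hω1 : ω = -1 := by linear_combination 2 * h
    have h2 : Complex.exp ((2 : ℕ) * (-(2 * Real.pi * Complex.I) / p k)) = 1 := by
      rw [Complex.exp_nat_mul, ← hω, hω1]; norm_num
    rw [Complex.exp_eq_one_iff] at h2
    obtain ⟨m, hm⟩ := h2
    have key : (-2 : ℂ) = m * p k := by
      apply mul_right_cancel₀ h2pi
      field_simp at hm
      linear_combination (2 * (Real.pi : ℂ) * Complex.I) * hm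
    have : (m * (p k : ℤ)) = -2 := by
      have : ((m * p k : ℤ) : ℂ) = ((-2 : ℤ) : ℂ) := by push_cast; linear_combination -key
      exact_mod_cast this
    have hdvd : (p k : ℤ) ∣ 2 := ⟨-m, by linarith⟩
    have hdvd2 : p k ∣ 2 := by exact_mod_cast hdvd
    have : p k = 2 := (Nat.prime_dvd_prime_iff_eq hpk Nat.prime_two).mp hdvd2
    rw [this] at hodd
    exact (Nat.not_odd_iff_even.mpr even_two) hodd
  refine ⟨?_, ha, hb⟩
  rw [hexpU, ← Matrix.mulVec_mulVec, ← Matrix.mulVec_mulVec]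
  have h0 : K⁻¹ *ᵥ (Pi.single (0 : Fin n) 1 : Fin n → ℂ) = fun _ => (n : ℂ)⁻¹ := by
    rw [hKinv, Matrix.smul_mulVec, Matrix.mulVec_single_one]
    funext r
    simp [Matrix.transpose_transpose, hKapp, hrow r]
  rw [h0]
  have h1 : (Matrix.diagonal (fun r => Complex.exp (c * (lam r : ℂ)))) *ᵥ
      (fun _ => (n : ℂ)⁻¹) = fun r => ((1 + ω) / 2 + (1 - ω) / 2 * K k r) * (n : ℂ)⁻¹ := by
    funext r
    rw [Matrix.mulVec_diagonal, hdiag r]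
  rw [h1]
  funext j
  have hsum : (K *ᵥ fun r => ((1 + ω) / 2 + (1 - ω) / 2 * K k r) * (n : ℂ)⁻¹) j
      = (1 + ω) / 2 * (n : ℂ)⁻¹ * (∑ r, K j r * K 0 r)
        + (1 - ω) / 2 * (n : ℂ)⁻¹ * (∑ r, K j r * K k r) := by
    simp only [Matrix.mulVec, dotProduct]
    rw [Finset.mul_sum, Finset.mul_sum, ← Finset.sum_add_distrib]
    congr 1
    funext r
    have : K 0 r = 1 := by rw [hKapp, hrow r]; norm_num
    rw [this]
    ring
  rw [hsum, horth j 0, horth j k]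
  simp only [Pi.add_apply, Pi.smul_apply, Pi.single_apply, smul_eq_mul]
  split_ifs with h1' h2'
  · exact absurd (h1'.symm.trans h2') (Ne.symm hk)
  · field_simp
    ring
  · field_simp
    ring
  · ring
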